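/- If 𝒜' is an elementary compression of the multiset 𝒜 of subsets of [n] (replacing non-nested A_i, A_j by A_i ∩ A_j and A_i ∪ A_j), then for any discrete random variables X₁,…,Xₙ with finite joint entropy, ∑_{A∈𝒜'} H(X_A) ≤ ∑_{A∈𝒜} H(X_A). -/

import Mathlib

open Finset

/-- Probability that the discrete random variable `X` takes the value `v`,
where `p` is the probability mass function on the finite sample space `Ω`. -/
noncomputable def probOf {Ω S : Type*} [Fintype Ω] [DecidableEq S]
    (p : Ω → ℝ) (X : Ω → S) (v : S) : ℝ :=
  ∑ ω ∈ univ.filter (fun ω => X ω = v), p ω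

/-- Shannon entropy (base 2) of a discrete random variable. -/
noncomputable def H {Ω S : Type*} [Fintype Ω] [DecidableEq S]
    (p : Ω → ℝ) (X : Ω → S) : ℝ :=
  -∑ v ∈ univ.image X, probOf p X v * Real.logb 2 (probOf p X v)

/-- Conditional Shannon entropy `H(X | Y)`. -/
noncomputable def condH {Ω S T : Type*} [Fintype Ω] [DecidableEq S] [DecidableEq T]
    (p : Ω → ℝ) (X : Ω → S) (Y : Ω → T) : ℝ :=
  -∑ v ∈ univ.image (fun ω => (X ω, Y ω)),
      probOf p (fun ω => (X ω, Y ω)) v *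
        Real.logb 2 (probOf p (fun ω => (X ω, Y ω)) v / probOf p Y v.2)

/-- Joint entropy of the subfamily `(X i)_{i ∈ A}`. -/
noncomputable def jointH {Ω S : Type*} [Fintype Ω] [DecidableEq S] {n : ℕ}
    (p : Ω → ℝ) (X : Fin n → Ω → S) (A : Finset (Fin n)) : ℝ :=
  H p (fun ω (i : {i // i ∈ A}) => X i.1 ω)

/-- Conditional joint entropy `H(X_A | X_B)`. -/
noncomputable def condJointH {Ω S : Type*} [Fintype Ω] [DecidableEq S] {n : ℕ}
    (p : Ω → ℝ) (X : Fin n → Ω → S) (A B : Finset (Fin n)) : ℝ :=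
  condH p (fun ω (i : {i // i ∈ A}) => X i.1 ω) (fun ω (i : {i // i ∈ B}) => X i.1 ω)

section helpers

variable {Ω T T' : Type*} [Fintype Ω] [DecidableEq T] [DecidableEq T'] (p : Ω → ℝ)

lemma probOf_nonneg (hp : ∀ ω, 0 ≤ p ω) (Y : Ω → T) (v : T) : 0 ≤ probOf p Y v :=
  Finset.sum_nonneg fun ω _ => hp ω

lemma le_probOf (hp : ∀ ω, 0 ≤ p ω) (Y : Ω → T) (ω : Ω) : p ω ≤ probOf p Y (Y ω) :=
  Finset.single_le_sum (fun ω _ => hp ω) (by simp)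

lemma probOf_le_comp (hp : ∀ ω, 0 ≤ p ω) (Y : Ω → T) (f : T → T') (v : T) :
    probOf p Y v ≤ probOf p (fun ω => f (Y ω)) (f v) := by
  apply Finset.sum_le_sum_of_subset_of_nonneg
  · intro ω hω
    simp only [mem_filter, mem_univ, true_and] at hω ⊢
    rw [hω]
  · intro ω _ _; exact hp ω

lemma sum_mul_comp (Y : Ω → T) (F : T → ℝ) :
    ∑ ω, p ω * F (Y ω) = ∑ v ∈ univ.image Y, probOf p Y v * F v := by
  rw [← Finset.sum_fiberwise_of_maps_to (g := Y)
    (fun ω _ => Finset.mem_image_of_mem Y (Finset.mem_univ ω))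
    (fun ω => p ω * F (Y ω))]
  refine Finset.sum_congr rfl fun v hv => ?_
  rw [probOf, Finset.sum_mul]
  refine Finset.sum_congr rfl fun ω hω => ?_
  rw [(Finset.mem_filter.mp hω).2]

lemma H_eq (Y : Ω → T) : H p Y = -∑ ω, p ω * Real.logb 2 (probOf p Y (Y ω)) := by
  rw [H, sum_mul_comp p Y (fun v => Real.logb 2 (probOf p Y v))]

lemma sum_probOf (Y : Ω → T) : ∑ v ∈ univ.image Y, probOf p Y v = ∑ ω, p ω := by
  simp only [probOf]
  exact Finset.sum_fiberwise_of_maps_to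
    (fun ω _ => Finset.mem_image_of_mem Y (Finset.mem_univ ω)) p

lemma probOf_comp (Y : Ω → T) (f : T → T') (w : T') :
    probOf p (fun ω => f (Y ω)) w
      = ∑ v ∈ (univ.image Y).filter (fun v => f v = w), probOf p Y v := by
  rw [probOf]
  rw [← Finset.sum_fiberwise_of_maps_to (g := Y)
    (t := (univ.image Y).filter (fun v => f v = w)) ?h p]
  case h =>
    intro ω hω
    simp only [mem_filter, mem_univ, true_and] at hω ⊢
    exact ⟨Finset.mem_image_of_mem _ (Finset.mem_univ ω), hω⟩
  refine Finset.sum_congr rfl fun v hv => ?_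
  rw [probOf]
  congr 1
  ext ω
  simp only [mem_filter, mem_univ, true_and]
  constructor
  · rintro ⟨_, h⟩; exact h
  · intro h; exact ⟨by rw [h]; exact (Finset.mem_filter.mp hv).2, h⟩

end helpers

lemma core_submodular {Ω V VA VB VI : Type*} [Fintype Ω]
    [DecidableEq V] [DecidableEq VA] [DecidableEq VB] [DecidableEq VI]
    (p : Ω → ℝ) (hp : ∀ ω, 0 ≤ p ω) (hsum : ∑ ω, p ω = 1)
    (Y : Ω → V) (fa : V → VA) (fb : V → VB) (fi : V → VI)
    (ga : VA → VI) (gb : VB → VI)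
    (hga : ∀ v, ga (fa v) = fi v) (hgb : ∀ v, gb (fb v) = fi v)
    (hinj : ∀ v w, fa v = fa w → fb v = fb w → v = w) :
    H p (fun ω => fi (Y ω)) + H p Y
      ≤ H p (fun ω => fa (Y ω)) + H p (fun ω => fb (Y ω)) := by
  classical
  set qa : VA → ℝ := probOf p (fun ω => fa (Y ω)) with hqa
  set qb : VB → ℝ := probOf p (fun ω => fb (Y ω)) with hqb
  set qi : VI → ℝ := probOf p (fun ω => fi (Y ω)) with hqi
  set q : V → ℝ := probOf p Y with hq
  have qa0 : ∀ x, 0 ≤ qa x := probOf_nonneg p hp _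
  have qb0 : ∀ x, 0 ≤ qb x := probOf_nonneg p hp _
  have qi0 : ∀ x, 0 ≤ qi x := probOf_nonneg p hp _
  have q0 : ∀ x, 0 ≤ q x := probOf_nonneg p hp _
  -- the support of p
  set supp : Finset Ω := univ.filter (fun ω => p ω ≠ 0) with hsupp
  have hsupp_zero : ∀ ω, ω ∉ supp → p ω = 0 := by
    intro ω hω
    by_contra h
    exact hω (by simp [hsupp, h])
  have hsupp_sum : ∑ ω ∈ supp, p ω = 1 := by
    rw [Finset.sum_subset (Finset.subset_univ supp) (fun ω _ h => hsupp_zero ω h), hsum]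
  have hpos : ∀ ω ∈ supp, 0 < p ω := by
    intro ω hω
    exact lt_of_le_of_ne (hp ω) (Ne.symm (by simpa [hsupp] using hω))
  -- positivity of the q's on the support
  have hqpos : ∀ ω ∈ supp, 0 < q (Y ω) := fun ω hω =>
    lt_of_lt_of_le (hpos ω hω) (le_probOf p hp Y ω)
  have hqapos : ∀ ω ∈ supp, 0 < qa (fa (Y ω)) := fun ω hω =>
    lt_of_lt_of_le (hqpos ω hω) (probOf_le_comp p hp Y fa (Y ω))
  have hqbpos : ∀ ω ∈ supp, 0 < qb (fb (Y ω)) := fun ω hω =>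
    lt_of_lt_of_le (hqpos ω hω) (probOf_le_comp p hp Y fb (Y ω))
  have hqipos : ∀ ω ∈ supp, 0 < qi (fi (Y ω)) := fun ω hω =>
    lt_of_lt_of_le (hqpos ω hω) (probOf_le_comp p hp Y fi (Y ω))
  -- main combinatorial bound
  set V' : Finset V := (univ.image Y).filter (fun v => q v ≠ 0) with hV'
  have hV'pos : ∀ v ∈ V', 0 < q v := by
    intro v hv
    exact lt_of_le_of_ne (q0 v) (Ne.symm (Finset.mem_filter.mp hv).2)
  have marg_a : ∀ z, ∑ x ∈ (univ.image (fun ω => fa (Y ω))).filter (fun x => ga x = z),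
      qa x = qi z := by
    intro z
    rw [hqi, hqa]
    rw [← probOf_comp p (fun ω => fa (Y ω)) ga z]
    congr 1
    funext ω
    exact hga (Y ω)
  have marg_b : ∀ z, ∑ x ∈ (univ.image (fun ω => fb (Y ω))).filter (fun x => gb x = z),
      qb x = qi z := by
    intro z
    rw [hqi, hqb]
    rw [← probOf_comp p (fun ω => fb (Y ω)) gb z]
    congr 1
    funext ω
    exact hgb (Y ω)
  have main : ∑ v ∈ V', qa (fa v) * qb (fb v) / qi (fi v) ≤ 1 := by
    rw [← Finset.sum_fiberwise_of_maps_to (g := fi) (t := V'.image fi)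
      (fun v hv => Finset.mem_image_of_mem fi hv)
      (fun v => qa (fa v) * qb (fb v) / qi (fi v))]
    have step1 : ∀ z ∈ V'.image fi,
        ∑ v ∈ V'.filter (fun v => fi v = z), qa (fa v) * qb (fb v) / qi (fi v) ≤ qi z := by
      intro z hz
      obtain ⟨v0, hv0, hv0z⟩ := Finset.mem_image.mp hz
      have hqiz : 0 < qi z := by
        rw [← hv0z]
        exact lt_of_lt_of_le (hV'pos v0 hv0) (probOf_le_comp p hp Y fi v0)
      have hrw : ∑ v ∈ V'.filter (fun v => fi v = z), qa (fa v) * qb (fb v) / qi (fi v)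
          = (∑ v ∈ V'.filter (fun v => fi v = z), qa (fa v) * qb (fb v)) / qi z := by
        rw [Finset.sum_div]
        exact Finset.sum_congr rfl fun v hv => by rw [(Finset.mem_filter.mp hv).2]
      rw [hrw, div_le_iff₀ hqiz]
      have pairinj : ∀ v ∈ V'.filter (fun v => fi v = z), ∀ w ∈ V'.filter (fun v => fi v = z),
          (fun v => (fa v, fb v)) v = (fun v => (fa v, fb v)) w → v = w := by
        intro v _ w _ h
        exact hinj v w (congrArg Prod.fst h) (congrArg Prod.snd h)
      have e1 : ∑ v ∈ V'.filter (fun v => fi v = z), qa (fa v) * qb (fb v)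
          = ∑ pr ∈ (V'.filter (fun v => fi v = z)).image (fun v => (fa v, fb v)),
              qa pr.1 * qb pr.2 :=
        (Finset.sum_image (f := fun pr : VA × VB => qa pr.1 * qb pr.2) pairinj).symm
      have e2 : ∑ pr ∈ (V'.filter (fun v => fi v = z)).image (fun v => (fa v, fb v)),
            qa pr.1 * qb pr.2
          ≤ ∑ pr ∈ ((V'.filter (fun v => fi v = z)).image fa) ×ˢ
              ((V'.filter (fun v => fi v = z)).image fb), qa pr.1 * qb pr.2 := by
        apply Finset.sum_le_sum_of_subset_of_nonneg
        · intro pr hpr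
          obtain ⟨v, hv, hvpr⟩ := Finset.mem_image.mp hpr
          rw [← hvpr]
          exact Finset.mem_product.mpr
            ⟨Finset.mem_image_of_mem fa hv, Finset.mem_image_of_mem fb hv⟩
        · intro pr _ _
          exact mul_nonneg (qa0 pr.1) (qb0 pr.2)
      have e3 : ∑ pr ∈ ((V'.filter (fun v => fi v = z)).image fa) ×ˢ
              ((V'.filter (fun v => fi v = z)).image fb), qa pr.1 * qb pr.2
          = (∑ x ∈ (V'.filter (fun v => fi v = z)).image fa, qa x) *
            (∑ y ∈ (V'.filter (fun v => fi v = z)).image fb, qb y) := by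
        rw [Finset.sum_product, Finset.sum_mul_sum]
      have e4 : ∑ x ∈ (V'.filter (fun v => fi v = z)).image fa, qa x ≤ qi z := by
        rw [← marg_a z]
        apply Finset.sum_le_sum_of_subset_of_nonneg
        · intro x hx
          obtain ⟨v, hv, hvx⟩ := Finset.mem_image.mp hx
          obtain ⟨hvV, hvz⟩ := Finset.mem_filter.mp hv
          obtain ⟨ω, _, hω⟩ := Finset.mem_image.mp (Finset.mem_filter.mp hvV).1
          refine Finset.mem_filter.mpr ⟨Finset.mem_image.mpr ⟨ω, Finset.mem_univ ω, ?_⟩, ?_⟩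
          · rw [hω, hvx]
          · rw [← hvx, hga v, hvz]
        · intro x _ _
          exact qa0 x
      have e5 : ∑ y ∈ (V'.filter (fun v => fi v = z)).image fb, qb y ≤ qi z := by
        rw [← marg_b z]
        apply Finset.sum_le_sum_of_subset_of_nonneg
        · intro x hx
          obtain ⟨v, hv, hvx⟩ := Finset.mem_image.mp hx
          obtain ⟨hvV, hvz⟩ := Finset.mem_filter.mp hv
          obtain ⟨ω, _, hω⟩ := Finset.mem_image.mp (Finset.mem_filter.mp hvV).1
          refine Finset.mem_filter.mpr ⟨Finset.mem_image.mpr ⟨ω, Finset.mem_univ ω, ?_⟩, ?_⟩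
          · rw [hω, hvx]
          · rw [← hvx, hgb v, hvz]
        · intro x _ _
          exact qb0 x
      calc ∑ v ∈ V'.filter (fun v => fi v = z), qa (fa v) * qb (fb v)
          ≤ (∑ x ∈ (V'.filter (fun v => fi v = z)).image fa, qa x) *
            (∑ y ∈ (V'.filter (fun v => fi v = z)).image fb, qb y) := by
            rw [e1]; exact e2.trans (le_of_eq e3)
        _ ≤ qi z * qi z := mul_le_mul e4 e5
            (Finset.sum_nonneg fun y _ => qb0 y) (qi0 z)

    calc ∑ z ∈ V'.image fi, ∑ v ∈ V'.filter (fun v => fi v = z),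
          qa (fa v) * qb (fb v) / qi (fi v)
        ≤ ∑ z ∈ V'.image fi, qi z := Finset.sum_le_sum step1
      _ ≤ ∑ z ∈ univ.image (fun ω => fi (Y ω)), qi z := by
          apply Finset.sum_le_sum_of_subset_of_nonneg
          · intro z hz
            obtain ⟨v, hv, hvz⟩ := Finset.mem_image.mp hz
            obtain ⟨ω, _, hω⟩ := Finset.mem_image.mp (Finset.mem_filter.mp hv).1
            exact Finset.mem_image.mpr ⟨ω, Finset.mem_univ ω, by rw [hω, hvz]⟩
          · intro z _ _; exact qi0 z
      _ = 1 := by rw [hqi, sum_probOf, hsum]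
    -- translate main into a bound on the support
  have main2 : ∑ ω ∈ supp, p ω *
      (qa (fa (Y ω)) * qb (fb (Y ω)) / (qi (fi (Y ω)) * q (Y ω))) ≤ 1 := by
    have e1 : ∑ ω ∈ supp, p ω *
        (qa (fa (Y ω)) * qb (fb (Y ω)) / (qi (fi (Y ω)) * q (Y ω)))
        = ∑ ω, p ω * (qa (fa (Y ω)) * qb (fb (Y ω)) / (qi (fi (Y ω)) * q (Y ω))) := by
      apply Finset.sum_subset (Finset.subset_univ supp)
      intro ω _ hω
      rw [hsupp_zero ω hω, zero_mul]
    have e2 : ∑ ω, p ω * (qa (fa (Y ω)) * qb (fb (Y ω)) / (qi (fi (Y ω)) * q (Y ω)))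
        = ∑ v ∈ univ.image Y, q v * (qa (fa v) * qb (fb v) / (qi (fi v) * q v)) :=
      sum_mul_comp p Y (fun v => qa (fa v) * qb (fb v) / (qi (fi v) * q v))
    have e3 : ∑ v ∈ univ.image Y, q v * (qa (fa v) * qb (fb v) / (qi (fi v) * q v))
        = ∑ v ∈ V', q v * (qa (fa v) * qb (fb v) / (qi (fi v) * q v)) := by
      symm
      apply Finset.sum_subset (Finset.filter_subset _ _)
      intro v hv hv'
      have : q v = 0 := by
        by_contra h
        exact hv' (Finset.mem_filter.mpr ⟨hv, h⟩)
      rw [this, zero_mul]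
    have e4 : ∑ v ∈ V', q v * (qa (fa v) * qb (fb v) / (qi (fi v) * q v))
        = ∑ v ∈ V', qa (fa v) * qb (fb v) / qi (fi v) := by
      refine Finset.sum_congr rfl fun v hv => ?_
      have h : q v ≠ 0 := (Finset.mem_filter.mp hv).2
      rcases eq_or_ne (qi (fi v)) 0 with h0 | h0
      · rw [h0]; simp
      · field_simp
    rw [e1, e2, e3, e4]
    exact main
  -- Jensen-type step on the support
  have key : ∑ ω ∈ supp, p ω *
      Real.log (qa (fa (Y ω)) * qb (fb (Y ω)) / (qi (fi (Y ω)) * q (Y ω))) ≤ 0 := by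
    have hb : ∀ ω ∈ supp, p ω *
        Real.log (qa (fa (Y ω)) * qb (fb (Y ω)) / (qi (fi (Y ω)) * q (Y ω)))
        ≤ p ω * (qa (fa (Y ω)) * qb (fb (Y ω)) / (qi (fi (Y ω)) * q (Y ω)) - 1) := by
      intro ω hω
      have ha := hqapos ω hω
      have hb' := hqbpos ω hω
      have hi := hqipos ω hω
      have hq' := hqpos ω hω
      have hr : 0 < qa (fa (Y ω)) * qb (fb (Y ω)) / (qi (fi (Y ω)) * q (Y ω)) :=
        div_pos (mul_pos ha hb') (mul_pos hi hq')
      exact mul_le_mul_of_nonneg_left (Real.log_le_sub_one_of_pos hr) (hp ω)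
    calc ∑ ω ∈ supp, p ω *
          Real.log (qa (fa (Y ω)) * qb (fb (Y ω)) / (qi (fi (Y ω)) * q (Y ω)))
        ≤ ∑ ω ∈ supp, p ω *
          (qa (fa (Y ω)) * qb (fb (Y ω)) / (qi (fi (Y ω)) * q (Y ω)) - 1) :=
          Finset.sum_le_sum hb
      _ = (∑ ω ∈ supp, p ω *
          (qa (fa (Y ω)) * qb (fb (Y ω)) / (qi (fi (Y ω)) * q (Y ω)))) -
          ∑ ω ∈ supp, p ω := by
          rw [← Finset.sum_sub_distrib]
          exact Finset.sum_congr rfl fun ω _ => by ring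
      _ ≤ 1 - 1 := by rw [hsupp_sum]; exact sub_le_sub_right main2 1
      _ = 0 := by ring
  -- convert the entropy inequality
  rw [H_eq, H_eq, H_eq, H_eq]
  have hlog2 : (0:ℝ) < Real.log 2 := Real.log_pos one_lt_two
  have hsplit : ∀ ω ∈ supp,
      p ω * Real.logb 2 (qa (fa (Y ω))) + p ω * Real.logb 2 (qb (fb (Y ω)))
      - p ω * Real.logb 2 (qi (fi (Y ω))) - p ω * Real.logb 2 (q (Y ω))
      = p ω * Real.log (qa (fa (Y ω)) * qb (fb (Y ω)) / (qi (fi (Y ω)) * q (Y ω)))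
          / Real.log 2 := by
    intro ω hω
    have ha := hqapos ω hω
    have hb' := hqbpos ω hω
    have hi := hqipos ω hω
    have hq' := hqpos ω hω
    rw [Real.log_div (by positivity) (by positivity),
        Real.log_mul (ne_of_gt ha) (ne_of_gt hb'),
        Real.log_mul (ne_of_gt hi) (ne_of_gt hq')]
    simp only [Real.logb]
    ring
  have hSA : ∑ ω, p ω * Real.logb 2 (qa (fa (Y ω)))
      = ∑ ω ∈ supp, p ω * Real.logb 2 (qa (fa (Y ω))) :=
    (Finset.sum_subset (Finset.subset_univ supp)
      (fun ω _ hω => by rw [hsupp_zero ω hω, zero_mul])).symm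
  have hSB : ∑ ω, p ω * Real.logb 2 (qb (fb (Y ω)))
      = ∑ ω ∈ supp, p ω * Real.logb 2 (qb (fb (Y ω))) :=
    (Finset.sum_subset (Finset.subset_univ supp)
      (fun ω _ hω => by rw [hsupp_zero ω hω, zero_mul])).symm
  have hSI : ∑ ω, p ω * Real.logb 2 (qi (fi (Y ω)))
      = ∑ ω ∈ supp, p ω * Real.logb 2 (qi (fi (Y ω))) :=
    (Finset.sum_subset (Finset.subset_univ supp)
      (fun ω _ hω => by rw [hsupp_zero ω hω, zero_mul])).symm
  have hSQ : ∑ ω, p ω * Real.logb 2 (q (Y ω))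
      = ∑ ω ∈ supp, p ω * Real.logb 2 (q (Y ω)) :=
    (Finset.sum_subset (Finset.subset_univ supp)
      (fun ω _ hω => by rw [hsupp_zero ω hω, zero_mul])).symm
  have hcomb : ∑ ω ∈ supp, p ω * Real.logb 2 (qa (fa (Y ω)))
      + ∑ ω ∈ supp, p ω * Real.logb 2 (qb (fb (Y ω)))
      - ∑ ω ∈ supp, p ω * Real.logb 2 (qi (fi (Y ω)))
      - ∑ ω ∈ supp, p ω * Real.logb 2 (q (Y ω))
      = (∑ ω ∈ supp, p ω *
          Real.log (qa (fa (Y ω)) * qb (fb (Y ω)) / (qi (fi (Y ω)) * q (Y ω))))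
          / Real.log 2 := by
    rw [Finset.sum_div, ← Finset.sum_add_distrib, ← Finset.sum_sub_distrib,
        ← Finset.sum_sub_distrib]
    exact Finset.sum_congr rfl hsplit
  have hfinal : ∑ ω ∈ supp, p ω * Real.logb 2 (qa (fa (Y ω)))
      + ∑ ω ∈ supp, p ω * Real.logb 2 (qb (fb (Y ω)))
      - ∑ ω ∈ supp, p ω * Real.logb 2 (qi (fi (Y ω)))
      - ∑ ω ∈ supp, p ω * Real.logb 2 (q (Y ω)) ≤ 0 := by
    rw [hcomb]
    exact div_nonpos_of_nonpos_of_nonneg key (le_of_lt hlog2)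
  rw [hSA, hSB, hSI, hSQ]
  linarith

lemma jointH_submodular {Ω S : Type*} [Fintype Ω] [DecidableEq S] {n : ℕ}
    (p : Ω → ℝ) (hp : ∀ ω, 0 ≤ p ω) (hsum : ∑ ω, p ω = 1)
    (X : Fin n → Ω → S) (A B : Finset (Fin n)) :
    jointH p X (A ∩ B) + jointH p X (A ∪ B) ≤ jointH p X A + jointH p X B := by
  have h := core_submodular p hp hsum
    (fun ω (i : {i // i ∈ A ∪ B}) => X i.1 ω)
    (fa := fun v (i : {i // i ∈ A}) => v ⟨i.1, mem_union_left _ i.2⟩)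
    (fb := fun v (i : {i // i ∈ B}) => v ⟨i.1, mem_union_right _ i.2⟩)
    (fi := fun v (i : {i // i ∈ A ∩ B}) =>
      v ⟨i.1, mem_union_left _ (mem_of_mem_inter_left i.2)⟩)
    (ga := fun x (i : {i // i ∈ A ∩ B}) => x ⟨i.1, mem_of_mem_inter_left i.2⟩)
    (gb := fun x (i : {i // i ∈ A ∩ B}) => x ⟨i.1, mem_of_mem_inter_right i.2⟩)
    (fun v => rfl) (fun v => rfl) ?_
  · exact h
  · intro v w h1 h2
    funext i
    rcases mem_union.mp i.2 with hi | hi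
    · exact congrFun h1 ⟨i.1, hi⟩
    · exact congrFun h2 ⟨i.1, hi⟩

lemma jointH_empty {Ω S : Type*} [Fintype Ω] [DecidableEq S] {n : ℕ}
    (p : Ω → ℝ) (hsum : ∑ ω, p ω = 1) (X : Fin n → Ω → S) :
    jointH p X (∅ : Finset (Fin n)) = 0 := by
  rw [jointH, H]
  rcases isEmpty_or_nonempty Ω with hΩ | hΩ
  · simp
  · obtain ⟨ω₀⟩ := hΩ
    have hconst : ∀ ω, (fun (i : {i // i ∈ (∅ : Finset (Fin n))}) => X i.1 ω)
        = (fun i => X i.1 ω₀) := by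
      intro ω
      funext i
      exact absurd i.2 (Finset.notMem_empty i.1)
    have himg : univ.image (fun ω (i : {i // i ∈ (∅ : Finset (Fin n))}) => X i.1 ω)
        = {fun i => X i.1 ω₀} := by
      apply Finset.eq_singleton_iff_unique_mem.mpr
      constructor
      · exact Finset.mem_image.mpr ⟨ω₀, Finset.mem_univ _, hconst ω₀⟩
      · intro x hx
        obtain ⟨ω, _, hω⟩ := Finset.mem_image.mp hx
        rw [← hω, hconst ω]
    rw [himg, Finset.sum_singleton]
    have hprob : probOf p (fun ω (i : {i // i ∈ (∅ : Finset (Fin n))}) => X i.1 ω)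
        (fun i => X i.1 ω₀) = 1 := by
      rw [probOf, ← hsum]
      congr 1
      apply Finset.filter_true_of_mem
      intro ω _
      exact hconst ω
    rw [hprob]
    simp

/-- Elementary compression does not increase the total entropy
`∑_{A ∈ 𝒜} H(X_A)`. -/
theorem elementary_compression_entropy_le {Ω S : Type*} [Fintype Ω] [DecidableEq S] {n : ℕ}
    (p : Ω → ℝ) (hp : ∀ ω, 0 ≤ p ω) (hsum : ∑ ω, p ω = 1)
    (X : Fin n → Ω → S)
    (𝒜 : Multiset (Finset (Fin n))) (A B : Finset (Fin n))
    (hA : A ∈ 𝒜) (hB : B ∈ 𝒜.erase A) (hAB : ¬ A ⊆ B) (hBA : ¬ B ⊆ A) :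
    ((((𝒜.erase A).erase B) +
        (if A ∩ B = ∅ then {A ∪ B} else {A ∩ B, A ∪ B})).map
      (fun C => jointH p X C)).sum ≤
      (𝒜.map (fun C => jointH p X C)).sum := by
  set M := (𝒜.erase A).erase B with hM
  have h2 : 𝒜 = A ::ₘ B ::ₘ M := by
    rw [hM, Multiset.cons_erase hB, Multiset.cons_erase hA]
  rw [h2]
  simp only [Multiset.map_cons, Multiset.sum_cons, Multiset.map_add, Multiset.sum_add]
  have key := jointH_submodular p hp hsum X A B
  split_ifs with h
  · have h0 := jointH_empty p hsum X
    rw [h, h0] at key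
    simp only [Multiset.map_singleton, Multiset.sum_singleton]
    linarith
  · simp only [Multiset.insert_eq_cons, Multiset.map_cons, Multiset.sum_cons,
      Multiset.map_singleton, Multiset.sum_singleton]
    linarith
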